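/- Let λ > 0, z ∈ ℂ₊, t > 0, and suppose f ∈ L²₊(ℝ) with f̂ ∈ H¹(0,∞) and ξ f̂(ξ) ∈ L²(0,∞) satisfies (i d/dξ - 2tξ + 2tλ - z) f̂(ξ) + (t/π)(û₀ * f̂)(ξ) = û₀(ξ) for ξ > 0, where u₀ is real-valued with û₀ ∈ H¹(ℝ) ∩ L¹(ℝ). Then Re⟨-2tξ f̂, (f̂)'⟩_{L²(0,∞)} = t‖f̂‖²_{L²(0,∞)}; in particular the boundary term ξ|f̂(ξ)|² vanishes at both ξ = 0⁺ and ξ = +∞. -/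

import Mathlib

open MeasureTheory Filter Set Topology Complex

noncomputable section

/-- Energy identity in the a priori `L²` bound.  Let `λ > 0`, `z ∈ ℂ₊`,
`t > 0`, and let `g = f̂` on `(0,∞)` (with derivative `g'`) satisfy
`g ∈ H¹(0,∞)`, `ξ g(ξ) ∈ L²(0,∞)`, a trace at `0⁺`, and the equation
`(i d/dξ - 2tξ + 2tλ - z) g(ξ) + (t/π)(û₀ * g)(ξ) = û₀(ξ)` for `ξ > 0`,
where `u₀` is real-valued and `w = û₀ ∈ H¹(ℝ) ∩ L¹(ℝ)`.
Then `Re ⟨-2tξ g, g'⟩_{L²(0,∞)} = t ‖g‖²_{L²(0,∞)}`; in particular the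
boundary term `ξ |g(ξ)|²` vanishes at `ξ = 0⁺` and at `ξ = +∞`. -/
theorem energy_identity_boundary_terms
    (lam t : ℝ) (hlam : 0 < lam) (ht : 0 < t) (z : ℂ) (hz : 0 < z.im)
    (g g' w w' : ℝ → ℂ) (gz : ℂ) (u₀ : ℝ → ℝ)
    (hg_deriv : ∀ ξ ∈ Ioi (0 : ℝ), HasDerivAt g (g' ξ) ξ)
    (hg_L2 : MemLp g 2 (volume.restrict (Ioi (0 : ℝ))))
    (hg'_L2 : MemLp g' 2 (volume.restrict (Ioi (0 : ℝ))))
    (hxg_L2 : MemLp (fun ξ : ℝ => (ξ : ℂ) * g ξ) 2 (volume.restrict (Ioi (0 : ℝ))))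
    (htrace : Tendsto g (𝓝[>] (0 : ℝ)) (𝓝 gz))
    (hw1 : Integrable w) (hw2 : MemLp w 2 (volume : Measure ℝ))
    (hw_deriv : ∀ ξ : ℝ, HasDerivAt w (w' ξ) ξ)
    (hw'2 : MemLp w' 2 (volume : Measure ℝ))
    (hwhat : ∀ ξ : ℝ, w ξ = ∫ x : ℝ, Complex.exp (-(Complex.I * x * ξ)) * (u₀ x : ℂ))
    (heq : ∀ ξ ∈ Ioi (0 : ℝ),
      Complex.I * g' ξ - 2 * t * ξ * g ξ + 2 * t * lam * g ξ - z * g ξ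
          + (t / Real.pi) * ∫ η : ℝ, w (ξ - η) * g η
        = w ξ) :
    (∫ ξ in Ioi (0 : ℝ),
        ((-(2 * t * ξ) : ℂ) * g ξ * (starRingEnd ℂ) (g' ξ))).re
      = t * ∫ ξ in Ioi (0 : ℝ), ‖g ξ‖ ^ 2 ∧
    Tendsto (fun ξ : ℝ => ξ * ‖g ξ‖ ^ 2) (𝓝[>] (0 : ℝ)) (𝓝 0) ∧
    Tendsto (fun ξ : ℝ => ξ * ‖g ξ‖ ^ 2) atTop (𝓝 0) := by
  -- the product `P ξ = (ξ g ξ) conj (g' ξ)` is integrable on `(0,∞)`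
  have hmeas : AEStronglyMeasurable (fun ξ : ℝ => ((ξ:ℂ) * g ξ) * (starRingEnd ℂ) (g' ξ))
      (volume.restrict (Ioi (0:ℝ))) :=
    hxg_L2.aestronglyMeasurable.mul
      (RCLike.continuous_conj.comp_aestronglyMeasurable hg'_L2.aestronglyMeasurable)
  have hsq1 : Integrable (fun ξ : ℝ => ‖(ξ:ℂ) * g ξ‖^2) (volume.restrict (Ioi (0:ℝ))) :=
    hxg_L2.norm.integrable_sq
  have hsq2 : Integrable (fun ξ : ℝ => ‖g' ξ‖^2) (volume.restrict (Ioi (0:ℝ))) :=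
    hg'_L2.norm.integrable_sq
  have hP_int : Integrable (fun ξ : ℝ => ((ξ:ℂ) * g ξ) * (starRingEnd ℂ) (g' ξ))
      (volume.restrict (Ioi (0:ℝ))) := by
    apply Integrable.mono' ((hsq1.add hsq2).div_const 2) hmeas
    filter_upwards with ξ
    simp only [Pi.add_apply]
    rw [norm_mul, RCLike.norm_conj]
    nlinarith [norm_nonneg ((ξ:ℂ) * g ξ), norm_nonneg (g' ξ),
      sq_nonneg (‖(ξ:ℂ) * g ξ‖ - ‖g' ξ‖)]
  have hgsq_int : Integrable (fun ξ : ℝ => ‖g ξ‖^2) (volume.restrict (Ioi (0:ℝ))) :=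
    hg_L2.norm.integrable_sq
  have hPre_int : Integrable (fun ξ : ℝ => 2 * (((ξ:ℂ) * g ξ) * (starRingEnd ℂ) (g' ξ)).re)
      (volume.restrict (Ioi (0:ℝ))) := by
    have h := hP_int.re
    simp only [RCLike.re_to_complex] at h
    exact h.const_mul 2
  -- derivative of `F ξ = ξ ‖g ξ‖²`
  have hnorm : ∀ y : ℂ, ‖y‖^2 = y.re^2 + y.im^2 := by
    intro y
    rw [Complex.sq_norm, Complex.normSq_apply]; ring
  have hF_deriv : ∀ ξ ∈ Ioi (0:ℝ), HasDerivAt (fun s : ℝ => s * ‖g s‖^2)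
      (‖g ξ‖^2 + 2 * (((ξ:ℂ) * g ξ) * (starRingEnd ℂ) (g' ξ)).re) ξ := by
    intro ξ hξ
    have hre : HasDerivAt (fun s : ℝ => (g s).re) ((g' ξ).re) ξ :=
      Complex.reCLM.hasFDerivAt.comp_hasDerivAt ξ (hg_deriv ξ hξ)
    have him : HasDerivAt (fun s : ℝ => (g s).im) ((g' ξ).im) ξ :=
      Complex.imCLM.hasFDerivAt.comp_hasDerivAt ξ (hg_deriv ξ hξ)
    have hd : HasDerivAt (fun s : ℝ => s * ((g s).re^2 + (g s).im^2)) _ ξ :=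
      (hasDerivAt_id ξ).mul ((hre.pow 2).add (him.pow 2))
    have heq' : (fun s : ℝ => s * ‖g s‖^2) = fun s : ℝ => s * ((g s).re^2 + (g s).im^2) := by
      funext s; rw [hnorm]
    rw [heq']
    convert hd using 1
    simp only [Complex.mul_re, Complex.conj_re, Complex.conj_im, Complex.ofReal_re,
      Complex.ofReal_im, Complex.mul_im, id_eq, hnorm, Pi.add_apply, Pi.pow_apply]
    ring
  have hF'_int : Integrable
      (fun ξ : ℝ => ‖g ξ‖^2 + 2 * (((ξ:ℂ) * g ξ) * (starRingEnd ℂ) (g' ξ)).re)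
      (volume.restrict (Ioi (0:ℝ))) := hgsq_int.add hPre_int
  -- limit at `0⁺`
  have htend0 : Tendsto (fun ξ : ℝ => ξ * ‖g ξ‖ ^ 2) (𝓝[>] (0:ℝ)) (𝓝 0) := by
    have h1 : Tendsto (fun ξ : ℝ => ξ) (𝓝[>] (0:ℝ)) (𝓝 0) :=
      tendsto_id.mono_left nhdsWithin_le_nhds
    have h2 : Tendsto (fun ξ : ℝ => ‖g ξ‖ ^ 2) (𝓝[>] (0:ℝ)) (𝓝 (‖gz‖^2)) :=
      ((continuous_norm.tendsto gz).comp htrace).pow 2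
    have := h1.mul h2
    rwa [zero_mul] at this
  -- limit at `+∞` exists
  have hlim : Tendsto (fun ξ : ℝ => ξ * ‖g ξ‖ ^ 2) atTop
      (𝓝 (limUnder atTop (fun ξ : ℝ => ξ * ‖g ξ‖ ^ 2))) :=
    tendsto_limUnder_of_hasDerivAt_of_integrableOn_Ioi hF_deriv hF'_int
  set L : ℝ := limUnder atTop (fun ξ : ℝ => ξ * ‖g ξ‖ ^ 2) with hLdef
  -- the limit at `+∞` is zero
  have hL0 : L = 0 := by
    by_contra hL
    have hLnn : 0 ≤ L := by
      apply ge_of_tendsto hlim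
      filter_upwards [eventually_ge_atTop (0:ℝ)] with ξ hξ
      exact mul_nonneg hξ (sq_nonneg _)
    have hLpos : 0 < L := hLnn.lt_of_ne (Ne.symm hL)
    have hev : ∀ᶠ ξ in atTop, L/2 < ξ * ‖g ξ‖ ^ 2 :=
      hlim.eventually (eventually_gt_nhds (half_lt_self hLpos))
    obtain ⟨a, ha⟩ := (hev.and (eventually_ge_atTop 1)).exists_forall_of_atTop
    set b : ℝ := max a 1 with hbdef
    have hb0 : (0:ℝ) < b := lt_of_lt_of_le one_pos (le_max_right _ _)
    have hbound : ∀ ξ ∈ Ioi b, (L/2) * ξ⁻¹ ≤ ‖g ξ‖^2 := by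
      intro ξ hξ
      have hξb : b < ξ := hξ
      have hξpos : 0 < ξ := hb0.trans hξb
      have h1 := (ha ξ (le_trans (le_max_left a 1) hξb.le)).1
      have h2 : ξ * ξ⁻¹ = 1 := mul_inv_cancel₀ hξpos.ne'
      have h3 : 0 < ξ⁻¹ := inv_pos.2 hξpos
      nlinarith
    have hgsq_int' : IntegrableOn (fun ξ : ℝ => ‖g ξ‖^2) (Ioi b) :=
      IntegrableOn.mono_set hgsq_int (Ioi_subset_Ioi hb0.le)
    have hinv_int : IntegrableOn (fun ξ : ℝ => (L/2) * ξ⁻¹) (Ioi b) := by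
      apply Integrable.mono' hgsq_int'
      · exact (measurable_inv.const_mul (L/2)).aestronglyMeasurable
      · rw [ae_restrict_iff' measurableSet_Ioi]
        filter_upwards with ξ hξ
        have hξpos : (0:ℝ) < ξ := hb0.trans hξ
        rw [Real.norm_of_nonneg (by positivity)]
        exact hbound ξ hξ
    have hinv_int' : IntegrableOn (fun ξ : ℝ => ξ⁻¹) (Ioi b) := by
      have h2 := hinv_int.const_mul (L/2)⁻¹
      have hhalf : (L/2) ≠ 0 := by positivity
      have heq2 : (fun ξ : ℝ => (L/2)⁻¹ * ((L/2) * ξ⁻¹)) = fun ξ : ℝ => ξ⁻¹ := by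
        funext ξ; rw [← mul_assoc, inv_mul_cancel₀ hhalf, one_mul]
      rwa [heq2] at h2
    have : IntegrableOn (fun ξ : ℝ => ξ ^ (-1:ℝ)) (Ioi b) := by
      rw [integrableOn_congr_fun (fun x hx => ?_) measurableSet_Ioi]
      · exact hinv_int'
      · have hxpos : (0:ℝ) < x := hb0.trans hx
        rw [Real.rpow_neg hxpos.le, Real.rpow_one]
    rw [integrableOn_Ioi_rpow_iff hb0] at this
    linarith
  -- continuity at `0` from the right (value at `0` is `0 * ‖g 0‖² = 0`)
  have hcont : ContinuousWithinAt (fun s : ℝ => s * ‖g s‖^2) (Ici (0:ℝ)) 0 := by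
    have hns : 𝓝[Ici (0:ℝ)] 0 = pure 0 ⊔ 𝓝[Ioi (0:ℝ)] 0 := by
      rw [← Set.Ioi_insert, nhdsWithin_insert]
    unfold ContinuousWithinAt
    rw [hns]
    refine tendsto_sup.2 ⟨?_, ?_⟩
    · have h : Tendsto (fun s : ℝ => s * ‖g s‖^2) (pure 0) (𝓝 ((0:ℝ) * ‖g 0‖^2)) :=
        tendsto_pure_nhds _ 0
      exact h
    · simpa using htend0
  -- FTC on `(0,∞)`
  have hlim0 : Tendsto (fun ξ : ℝ => ξ * ‖g ξ‖ ^ 2) atTop (𝓝 0) := hL0 ▸ hlim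
  have hkey : (∫ ξ in Ioi (0:ℝ),
      (‖g ξ‖^2 + 2 * (((ξ:ℂ) * g ξ) * (starRingEnd ℂ) (g' ξ)).re)) = 0 := by
    have h := integral_Ioi_of_hasDerivAt_of_tendsto hcont hF_deriv hF'_int hlim0
    rw [h]; ring
  rw [integral_add hgsq_int hPre_int, integral_const_mul] at hkey
  have hPre_val : ∫ ξ in Ioi (0:ℝ), (((ξ:ℂ) * g ξ) * (starRingEnd ℂ) (g' ξ)).re
      = -(∫ ξ in Ioi (0:ℝ), ‖g ξ‖^2) / 2 := by linarith
  refine ⟨?_, htend0, hlim0⟩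
  -- final computation
  have h1 : (∫ ξ in Ioi (0:ℝ), ((-(2 * t * ξ) : ℂ) * g ξ * (starRingEnd ℂ) (g' ξ)))
      = ((-(2*t) : ℝ) : ℂ) * ∫ ξ in Ioi (0:ℝ), ((ξ:ℂ) * g ξ) * (starRingEnd ℂ) (g' ξ) := by
    rw [← integral_const_mul]
    apply integral_congr_ae
    filter_upwards with ξ
    push_cast
    ring
  rw [h1, Complex.re_ofReal_mul]
  have h2 : (∫ ξ in Ioi (0:ℝ), ((ξ:ℂ) * g ξ) * (starRingEnd ℂ) (g' ξ)).re
      = ∫ ξ in Ioi (0:ℝ), (((ξ:ℂ) * g ξ) * (starRingEnd ℂ) (g' ξ)).re := by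
    have h := integral_re hP_int
    simp only [RCLike.re_to_complex] at h
    exact h.symm
  rw [h2, hPre_val]
  ring
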